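/- Let G be an abelian group, t ≥ 2, and H_1,...,H_t distinct subgroups forming a t-star with kernel D (pairwise intersections equal D) with [H_i : D] > 2 for each i. Let the collection A consist of: the sets A_i = H_i \ D for 1 ≤ i ≤ t, together with all cosets of D contained in H = H_1 + ... + H_t but not contained in ⋃_{i=1}^t H_i. Then A is a bimodal collection of subsets of G. -/

import Mathlib

variable {G : Type*} [AddCommGroup G] [Fintype G]

/-- `N A i δ` counts the pairs `(a, b)` with `a ∈ A i`, `b ∈ A j` for some `j ≠ i`,
and `a - b = δ`. -/
noncomputable def bimodalCount {ι : Type*} (A : ι → Set G) (i : ι) (δ : G) : ℕ :=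
  {p : G × G | p.1 ∈ A i ∧ (∃ j, j ≠ i ∧ p.2 ∈ A j) ∧ p.1 - p.2 = δ}.ncard

/-- A collection of subsets has the bimodal property if every nonzero `δ` occurs as
an external difference out of `A i` either `0` or `|A i|` times. -/
def IsBimodal {ι : Type*} (A : ι → Set G) : Prop :=
  ∀ δ : G, δ ≠ 0 → ∀ i : ι,
    bimodalCount A i δ = 0 ∨ bimodalCount A i δ = (A i).ncard

/-- The internal difference group of a subset `X`: the subgroup generated by all
differences of elements of `X`. -/
def idg (X : Set G) : AddSubgroup G :=
  AddSubgroup.closure {d : G | ∃ x ∈ X, ∃ y ∈ X, x - y = d}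

/-- The sets `H i \ D` of a `t`-star, together with all cosets of `D`
contained in `H = H 1 + ... + H t` but not contained in `⋃ i, H i`, form a bimodal
collection. -/
private lemma mem_coset_iff (D : AddSubgroup G) (g x : G) :
    x ∈ (g + ·) '' (D : Set G) ↔ x - g ∈ D := by
  constructor
  · rintro ⟨d, hd, rfl⟩
    simpa using hd
  · intro h
    exact ⟨x - g, h, by dsimp only; abel⟩

private lemma key_lemma {ι : Type*} (A : ι → Set G) (i : ι) (K : AddSubgroup G)
    (hA : ∀ a ∈ A i, ∀ b ∈ A i, a - b ∈ K)
    (hB : ∀ x, (∃ j, j ≠ i ∧ x ∈ A j) → ∀ k ∈ K, ∃ j, j ≠ i ∧ x + k ∈ A j)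
    (δ : G) : bimodalCount A i δ = 0 ∨ bimodalCount A i δ = (A i).ncard := by
  classical
  have himg : {p : G × G | p.1 ∈ A i ∧ (∃ j, j ≠ i ∧ p.2 ∈ A j) ∧ p.1 - p.2 = δ}
      = (fun a => (a, a - δ)) '' {a | a ∈ A i ∧ ∃ j, j ≠ i ∧ a - δ ∈ A j} := by
    ext ⟨a, b⟩
    simp only [Set.mem_setOf_eq, Set.mem_image]
    constructor
    · rintro ⟨h1, h2, h3⟩
      have hb : b = a - δ := by rw [← h3]; abel
      exact ⟨a, ⟨h1, hb ▸ h2⟩, by rw [hb]⟩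
    · rintro ⟨x, ⟨h1, h2⟩, h3⟩
      obtain ⟨rfl, rfl⟩ := Prod.mk.injEq .. ▸ h3
      exact ⟨h1, h2, by abel⟩
  have hcount : bimodalCount A i δ
      = ({a | a ∈ A i ∧ ∃ j, j ≠ i ∧ a - δ ∈ A j} : Set G).ncard := by
    unfold bimodalCount
    rw [himg, Set.ncard_image_of_injective _ (fun x y h => congrArg Prod.fst h)]
  by_cases h : ∃ a, a ∈ A i ∧ ∃ j, j ≠ i ∧ a - δ ∈ A j
  · right
    rw [hcount]
    congr 1
    ext a
    simp only [Set.mem_setOf_eq]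
    refine ⟨fun h => h.1, fun ha => ⟨ha, ?_⟩⟩
    obtain ⟨a₀, ha₀, hB₀⟩ := h
    have hk : a - a₀ ∈ K := hA a ha a₀ ha₀
    have := hB _ hB₀ (a - a₀) hk
    rwa [show a₀ - δ + (a - a₀) = a - δ by abel] at this
  · left
    rw [hcount]
    have : ({a | a ∈ A i ∧ ∃ j, j ≠ i ∧ a - δ ∈ A j} : Set G) = ∅ := by
      ext a
      simp only [Set.mem_setOf_eq, Set.mem_empty_iff_false, iff_false]
      exact fun hc => h ⟨a, hc⟩
    rw [this, Set.ncard_empty]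

theorem star_construction_bimodal {t : ℕ} (ht : 2 ≤ t) (H : Fin t → AddSubgroup G)
    (hinj : Function.Injective H) (D : AddSubgroup G)
    (hstar : ∀ i j, i ≠ j → H i ⊓ H j = D)
    (hindex : ∀ i, 2 < D.relIndex (H i)) :
    IsBimodal
      (Sum.elim (fun i : Fin t => (H i : Set G) \ (D : Set G))
        (fun S : {S : Set G // (∃ g : G, S = (g + ·) '' (D : Set G)) ∧
            S ⊆ ((⨆ i, H i : AddSubgroup G) : Set G) ∧
            ¬ S ⊆ ⋃ i, (H i : Set G)} => S.1)) := by
  classical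
  intro δ hδ i
  have i₀ : Fin t := ⟨0, by omega⟩
  have hne : ∀ j : Fin t, ∃ k : Fin t, k ≠ j := by
    intro j
    by_cases h : j = ⟨0, by omega⟩
    · exact ⟨⟨1, by omega⟩, by rw [h]; simp [Fin.ext_iff]⟩
    · exact ⟨⟨0, by omega⟩, fun he => h he.symm⟩
  have hDle : ∀ j, D ≤ H j := by
    intro j
    obtain ⟨k, hk⟩ := hne j
    rw [← hstar j k (fun he => hk (he ▸ rfl))]
    exact inf_le_left
  have hHle : ∀ j : Fin t, ∀ x ∈ H j, x ∈ (⨆ k, H k : AddSubgroup G) :=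
    fun j x hx => (le_iSup H j) hx
  have hDleTop : ∀ x ∈ D, x ∈ (⨆ k, H k : AddSubgroup G) :=
    fun x hx => hHle i₀ x (hDle i₀ hx)
  -- a coset of D not covered by the union is disjoint from each H j
  have hSdisjH : ∀ (g : G), ¬ ((g + ·) '' (D : Set G)) ⊆ (⋃ k, (H k : Set G)) →
      ∀ j : Fin t, ∀ x ∈ (g + ·) '' (D : Set G), x ∉ H j := by
    intro g hg j x hxS hxH
    apply hg
    intro y hyS
    refine Set.mem_iUnion.2 ⟨j, ?_⟩
    rw [mem_coset_iff] at hxS hyS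
    have h1 : y - x ∈ D := by
      have := D.sub_mem hyS hxS
      simpa [sub_sub_sub_cancel_right] using this
    have h2 : y - x ∈ H j := hDle j h1
    have h3 : y = x + (y - x) := by abel
    rw [h3]
    exact (H j).add_mem hxH h2
  have hcosetEq : ∀ (g g' x : G), x ∈ (g + ·) '' (D : Set G) → x ∈ (g' + ·) '' (D : Set G) →
      ((g + ·) '' (D : Set G)) = ((g' + ·) '' (D : Set G)) := by
    intro g g' x hx hx'
    rw [mem_coset_iff] at hx hx'
    ext y
    rw [mem_coset_iff, mem_coset_iff]
    constructor
    · intro hy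
      have h : y - g' = (y - g) - ((x - g) - (x - g')) := by abel
      rw [h]; exact D.sub_mem hy (D.sub_mem hx hx')
    · intro hy
      have h : y - g = (y - g') - ((x - g') - (x - g)) := by abel
      rw [h]; exact D.sub_mem hy (D.sub_mem hx' hx)
  obtain i | S := i
  · -- part `H i \ D`, take K = H i
    refine key_lemma _ _ (H i) ?_ ?_ δ
    · intro a ha b hb
      simp only [Sum.elim_inl] at ha hb
      exact (H i).sub_mem ha.1 hb.1
    · intro x hx k hk
      have hx' : x ∈ (⨆ k, H k : AddSubgroup G) ∧ x ∉ H i := by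
        obtain ⟨j, hj, hxj⟩ := hx
        obtain j' | S' := j
        · simp only [Sum.elim_inl] at hxj
          have hji : j' ≠ i := fun he => hj (by rw [he])
          refine ⟨hHle j' x hxj.1, fun hxi => hxj.2 ?_⟩
          have hm : x ∈ H i ⊓ H j' := ⟨hxi, hxj.1⟩
          rw [hstar i j' (Ne.symm hji)] at hm
          exact hm
        · simp only [Sum.elim_inr] at hxj
          obtain ⟨⟨g, hg⟩, hsub, hnot⟩ := S'.2
          refine ⟨hsub hxj, fun hxi => ?_⟩
          exact hSdisjH g (by rw [← hg]; exact hnot) i x (by rw [← hg]; exact hxj) hxi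
      have hxk1 : x + k ∈ (⨆ k, H k : AddSubgroup G) := add_mem hx'.1 (hHle i k hk)
      have hxk2 : x + k ∉ H i := by
        intro h
        apply hx'.2
        have := (H i).sub_mem h hk
        simpa using this
      by_cases hc : ∃ j : Fin t, x + k ∈ H j
      · obtain ⟨j, hj⟩ := hc
        refine ⟨Sum.inl j, fun he => hxk2 ?_, ?_⟩
        · have : j = i := Sum.inl_injective he
          exact this ▸ hj
        · simp only [Sum.elim_inl]
          exact ⟨hj, fun hD => hxk2 (hDle i hD)⟩
      · refine ⟨Sum.inr ⟨(x + k + ·) '' (D : Set G), ⟨x + k, rfl⟩, ?_, ?_⟩,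
          Sum.inr_ne_inl, ?_⟩
        · rintro y ⟨d, hd, rfl⟩
          exact add_mem hxk1 (hDleTop d hd)
        · intro hs
          obtain ⟨j, hj⟩ := Set.mem_iUnion.1 (hs ((mem_coset_iff D _ _).2 (by rw [sub_self]; exact D.zero_mem)))
          exact hc ⟨j, hj⟩
        · simp only [Sum.elim_inr]
          exact (mem_coset_iff D _ _).2 (by rw [sub_self]; exact D.zero_mem)
  · -- part a coset of D, take K = D
    obtain ⟨⟨g, hg⟩, hsub, hnot⟩ := S.2
    refine key_lemma _ _ D ?_ ?_ δ
    · intro a ha b hb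
      simp only [Sum.elim_inr] at ha hb
      rw [hg, mem_coset_iff] at ha hb
      have := D.sub_mem ha hb
      simpa [sub_sub_sub_cancel_right] using this
    · intro x hx k hk
      have hx' : x ∈ (⨆ k, H k : AddSubgroup G) ∧ x ∉ D ∧ x ∉ S.1 := by
        obtain ⟨j, hj, hxj⟩ := hx
        obtain j' | S' := j
        · simp only [Sum.elim_inl] at hxj
          refine ⟨hHle j' x hxj.1, hxj.2, fun hxS => ?_⟩
          exact hSdisjH g (by rw [← hg]; exact hnot) j' x (by rw [← hg]; exact hxS) hxj.1
        · simp only [Sum.elim_inr] at hxj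
          obtain ⟨⟨g', hg'⟩, hsub', hnot'⟩ := S'.2
          refine ⟨hsub' hxj, ?_, ?_⟩
          · intro hxD
            apply hnot'
            rw [hg']
            intro y hy
            rw [mem_coset_iff] at hy
            have hx'' : x - g' ∈ D := by
              rw [← mem_coset_iff]; rw [← hg']; exact hxj
            have hgD : g' ∈ D := by
              have := D.sub_mem hxD hx''
              simpa using this
            have hyD : y ∈ D := by
              have h := D.add_mem hy hgD
              rwa [show y - g' + g' = y by abel] at h
            exact Set.mem_iUnion.2 ⟨i₀, hDle i₀ hyD⟩
          · intro hxS
            apply hj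
            have hval : S'.1 = S.1 := by
              rw [hg, hg']
              exact hcosetEq g' g x (by rw [← hg']; exact hxj) (by rw [← hg]; exact hxS)
            exact congrArg Sum.inr (Subtype.ext hval)
      have hxk1 : x + k ∈ (⨆ k, H k : AddSubgroup G) := add_mem hx'.1 (hDleTop k hk)
      have hxk2 : x + k ∉ D := by
        intro h
        apply hx'.2.1
        have := D.sub_mem h hk
        simpa using this
      have hxk3 : x + k ∉ S.1 := by
        intro h
        apply hx'.2.2
        rw [hg, mem_coset_iff] at h ⊢
        rw [show x - g = (x + k - g) - k by abel]
        exact D.sub_mem h hk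
      by_cases hc : ∃ j : Fin t, x + k ∈ H j
      · obtain ⟨j, hj⟩ := hc
        refine ⟨Sum.inl j, Sum.inl_ne_inr, ?_⟩
        simp only [Sum.elim_inl]
        exact ⟨hj, hxk2⟩
      · refine ⟨Sum.inr ⟨(x + k + ·) '' (D : Set G), ⟨x + k, rfl⟩, ?_, ?_⟩, ?_, ?_⟩
        · rintro y ⟨d, hd, rfl⟩
          exact add_mem hxk1 (hDleTop d hd)
        · intro hs
          obtain ⟨j, hj⟩ := Set.mem_iUnion.1 (hs ((mem_coset_iff D _ _).2 (by rw [sub_self]; exact D.zero_mem)))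
          exact hc ⟨j, hj⟩
        · intro he
          have hval : ((x + k + ·) '' (D : Set G)) = S.1 :=
            congrArg Subtype.val (Sum.inr_injective he)
          exact hxk3 (hval ▸ (mem_coset_iff D _ _).2 (by rw [sub_self]; exact D.zero_mem))
        · simp only [Sum.elim_inr]
          exact (mem_coset_iff D _ _).2 (by rw [sub_self]; exact D.zero_mem)
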